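/- Let u₁,…,uₙ and v₁,…,vₙ be two orthonormal bases of ℂⁿ. There exists a conjugation C on ℂⁿ and unimodular constants α₁,…,αₙ with C uᵢ = αᵢ vᵢ for all i if and only if ⟨uᵢ, vⱼ⟩ = αⱼ ᾱᵢ ⟨uⱼ, vᵢ⟩ holds for some unimodular α₁,…,αₙ and all 1 ≤ i, j ≤ n. -/

import Mathlib

open scoped ComplexConjugate
open Matrix

/-- Paper-convention inner product on ℂⁿ: ⟨x,y⟩ = ∑ xᵢ conj(yᵢ). -/
noncomputable def cinner {n : ℕ} (x y : Fin n → ℂ) : ℂ := ∑ i, x i * conj (y i)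

/-- A conjugation on ℂⁿ: a conjugate-linear isometric involution. -/
structure Conjugation (n : ℕ) where
  toFun : (Fin n → ℂ) → (Fin n → ℂ)
  map_add : ∀ x y, toFun (x + y) = toFun x + toFun y
  map_smul : ∀ (a : ℂ) (x), toFun (a • x) = conj a • toFun x
  isometric : ∀ x y, cinner (toFun x) (toFun y) = cinner y x
  involutive : ∀ x, toFun (toFun x) = x

/-- `T` is unitarily equivalent to a complex symmetric matrix. -/
def UECSM {n : ℕ} (T : Matrix (Fin n) (Fin n) ℂ) : Prop :=
  ∃ Q ∈ Matrix.unitaryGroup (Fin n) ℂ, (Qᴴ * T * Q)ᵀ = Qᴴ * T * Q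

lemma cinner_conj_symm {n : ℕ} (x y : Fin n → ℂ) : conj (cinner x y) = cinner y x := by
  simp only [cinner, map_sum, _root_.map_mul, Complex.conj_conj]
  exact Finset.sum_congr rfl fun i _ => mul_comm _ _

lemma cinner_smul_right {n : ℕ} (a : ℂ) (x y : Fin n → ℂ) :
    cinner x (a • y) = conj a * cinner x y := by
  simp only [cinner, Pi.smul_apply, smul_eq_mul, _root_.map_mul, Finset.mul_sum]
  exact Finset.sum_congr rfl fun i _ => by ring

lemma cinner_add_left {n : ℕ} (x y z : Fin n → ℂ) :
    cinner (x + y) z = cinner x z + cinner y z := by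
  simp only [cinner, Pi.add_apply, add_mul, Finset.sum_add_distrib]

lemma cinner_smul_left {n : ℕ} (a : ℂ) (x y : Fin n → ℂ) :
    cinner (a • x) y = a * cinner x y := by
  simp only [cinner, Pi.smul_apply, smul_eq_mul, Finset.mul_sum, mul_assoc]

lemma cinner_sum_left {n m : ℕ} (a : Fin m → ℂ) (w : Fin m → Fin n → ℂ) (y : Fin n → ℂ) :
    cinner (fun k => ∑ i, a i * w i k) y = ∑ i, a i * cinner (w i) y := by
  simp only [cinner, Finset.sum_mul, Finset.mul_sum, mul_assoc]
  exact Finset.sum_comm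

lemma cinner_sum_right {n m : ℕ} (a : Fin m → ℂ) (w : Fin m → Fin n → ℂ) (x : Fin n → ℂ) :
    cinner x (fun k => ∑ i, a i * w i k) = ∑ i, conj (a i) * cinner x (w i) := by
  rw [← cinner_conj_symm, cinner_sum_left, map_sum]
  exact Finset.sum_congr rfl fun i _ => by rw [_root_.map_mul, cinner_conj_symm]

lemma expand_aux {n : ℕ} (u : Fin n → Fin n → ℂ)
    (hu : ∀ i j, cinner (u i) (u j) = if i = j then 1 else 0)
    (x : Fin n → ℂ) (k : Fin n) : ∑ i, cinner x (u i) * u i k = x k := by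
  have h1 : (Matrix.of u) * (Matrix.of u)ᴴ = 1 := by
    ext i j
    simpa [Matrix.mul_apply, Matrix.conjTranspose_apply, Matrix.one_apply, cinner] using hu i j
  have h2 : (Matrix.of u)ᴴ * (Matrix.of u) = 1 := mul_eq_one_comm.mp h1
  have h3 : ∀ l k, ∑ i, conj (u i l) * u i k = if l = k then 1 else 0 := by
    intro l k
    have := congrFun (congrFun h2 l) k
    simpa [Matrix.mul_apply, Matrix.conjTranspose_apply, Matrix.one_apply] using this
  calc ∑ i, cinner x (u i) * u i k
      = ∑ i, ∑ l, x l * (conj (u i l) * u i k) := by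
        simp only [cinner, Finset.sum_mul, mul_assoc]
    _ = ∑ l, x l * ∑ i, conj (u i l) * u i k := by
        rw [Finset.sum_comm]
        simp only [Finset.mul_sum]
    _ = x k := by
        simp only [h3]
        simp [Finset.sum_ite_eq, Finset.mem_univ]

lemma parseval_aux {n : ℕ} (u : Fin n → Fin n → ℂ)
    (hu : ∀ i j, cinner (u i) (u j) = if i = j then 1 else 0)
    (x y : Fin n → ℂ) : cinner y x = ∑ i, cinner y (u i) * conj (cinner x (u i)) := by
  have hx : x = fun k => ∑ i, cinner x (u i) * u i k := by
    funext k; rw [expand_aux u hu]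
  conv_lhs => rw [hx]
  rw [cinner_sum_right]
  exact Finset.sum_congr rfl fun i _ => mul_comm _ _

theorem exists_conjugation_iff_alpha_condition {n : ℕ} (u v : Fin n → (Fin n → ℂ))
    (hu : ∀ i j, cinner (u i) (u j) = if i = j then 1 else 0)
    (hv : ∀ i j, cinner (v i) (v j) = if i = j then 1 else 0) :
    (∃ (C : Conjugation n) (α : Fin n → ℂ), (∀ i, ‖α i‖ = 1) ∧
        ∀ i, C.toFun (u i) = α i • v i) ↔
      (∃ α : Fin n → ℂ, (∀ i, ‖α i‖ = 1) ∧
        ∀ i j, cinner (u i) (v j) = α j * conj (α i) * cinner (u j) (v i)) := by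
  constructor
  · rintro ⟨C, α, h1, h2⟩
    refine ⟨α, h1, fun i j => ?_⟩
    have hαi : ∀ i, conj (α i) * α i = 1 := by
      intro i
      rw [mul_comm, Complex.mul_conj, Complex.normSq_eq_norm_sq, h1]
      norm_num
    have hsym : ∀ x y, cinner x (C.toFun y) = cinner y (C.toFun x) := by
      intro x y
      have := C.isometric (C.toFun x) y
      rwa [C.involutive] at this
    have hv' : v j = conj (α j) • C.toFun (u j) := by
      rw [h2, smul_smul, hαi, one_smul]
    calc cinner (u i) (v j)
        = conj (conj (α j)) * cinner (u i) (C.toFun (u j)) := by rw [hv', cinner_smul_right]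
      _ = α j * cinner (u j) (C.toFun (u i)) := by rw [Complex.conj_conj, hsym]
      _ = α j * (conj (α i) * cinner (u j) (v i)) := by rw [h2, cinner_smul_right]
      _ = α j * conj (α i) * cinner (u j) (v i) := by ring
  · rintro ⟨α, h1, h2⟩
    have hαi : ∀ i, conj (α i) * α i = 1 := by
      intro i
      rw [mul_comm, Complex.mul_conj, Complex.normSq_eq_norm_sq, h1]
      norm_num
    set F : (Fin n → ℂ) → (Fin n → ℂ) :=
      fun x k => ∑ i, (conj (cinner x (u i)) * α i) * v i k with hF
    have hFdef : ∀ x, F x = fun k => ∑ i, (conj (cinner x (u i)) * α i) * v i k := fun _ => rfl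
    have hFu : ∀ i, F (u i) = α i • v i := by
      intro i
      funext k
      rw [hFdef]
      simp only [hu]
      rw [Finset.sum_eq_single i]
      · simp
      · intro j _ hj
        simp [if_neg (Ne.symm hj)]
      · simp
    have hFcinner : ∀ x y, cinner (F x) y = ∑ i, (conj (cinner x (u i)) * α i) * cinner (v i) y :=
      fun x y => cinner_sum_left _ _ _
    refine ⟨⟨F, ?_, ?_, ?_, ?_⟩, α, h1, fun i => hFu i⟩
    · intro x y
      funext k
      simp only [hF, Pi.add_apply, cinner_add_left, _root_.map_add, add_mul,
        Finset.sum_add_distrib]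
    · intro a x
      funext k
      simp only [hF, Pi.smul_apply, smul_eq_mul, cinner_smul_left, _root_.map_mul,
        Finset.mul_sum]
      exact Finset.sum_congr rfl fun i _ => by ring
    · intro x y
      rw [hFdef y, cinner_sum_right]
      simp only [hFcinner]
      rw [parseval_aux u hu x y]
      refine Finset.sum_congr rfl fun i _ => ?_
      rw [Finset.mul_sum]
      rw [Finset.sum_eq_single i]
      · simp only [hv, if_pos rfl, ite_true, _root_.map_mul, Complex.conj_conj, mul_one]
        linear_combination cinner y (u i) * conj (cinner x (u i)) * hαi i
      · intro j _ hj
        simp [hv, if_neg hj]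
      · simp
    · intro x
      funext k
      rw [hFdef (F x)]
      have step1 : ∀ j, cinner (F x) (u j) =
          ∑ i, (conj (cinner x (u i)) * α i) * cinner (v i) (u j) := fun j => hFcinner x (u j)
      simp only [step1, map_sum, _root_.map_mul, Complex.conj_conj, cinner_conj_symm]
      have key : ∀ j, (∑ i, cinner x (u i) * conj (α i) * cinner (u j) (v i)) * α j * v j k
          = ∑ i, cinner x (u i) * (cinner (u i) (v j) * v j k) := by
        intro j
        rw [Finset.sum_mul, Finset.sum_mul]
        refine Finset.sum_congr rfl fun i _ => ?_
        rw [h2 i j]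
        ring
      calc ∑ j, (∑ i, cinner x (u i) * conj (α i) * cinner (u j) (v i)) * α j * v j k
          = ∑ j, ∑ i, cinner x (u i) * (cinner (u i) (v j) * v j k) := by
            exact Finset.sum_congr rfl fun j _ => key j
        _ = ∑ i, cinner x (u i) * ∑ j, cinner (u i) (v j) * v j k := by
            rw [Finset.sum_comm]; simp only [Finset.mul_sum]
        _ = ∑ i, cinner x (u i) * u i k := by
            exact Finset.sum_congr rfl fun i _ => by rw [expand_aux v hv]
        _ = x k := expand_aux u hu x k
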